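/- Let F be a finite field, let 1 ≤ b < c, and let G be a b×c minimal-basic polynomial generator matrix of a convolutional code C with degree δ = Σ_i ν_i ≥ 1, and set T = T_{dfree}(C). Then every nonzero codeword that starts at time 0 accumulates at least the free distance of weight within its first T segments: for every u ∈ F[[z]]^b whose 0-th segment (coeff_0(u_1),…,coeff_0(u_b)) is nonzero, the total Hamming weight of the segments 0,…,T−1 of u·G is at least d_free(C). -/

import Mathlib

open Polynomial Matrix

/-- The encoding map of a convolutional code with polynomial generator matrix `G`:
an information sequence `u ∈ F[[z]]^b` is mapped to the codeword `u · G ∈ F[[z]]^c`. -/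
noncomputable def encode {F : Type*} [Field F] {b c : ℕ}
    (G : Matrix (Fin b) (Fin c) (Polynomial F)) (u : Fin b → PowerSeries F) :
    Fin c → PowerSeries F :=
  fun j => ∑ i, u i * (G i j : PowerSeries F)

/-- Hamming weight of `v ∈ F[[z]]^c`: the extended-natural-number cardinality of the
set of pairs `(l, t)` such that `coeff_t (v_l) ≠ 0`. -/
noncomputable def wH {F : Type*} [Field F] {c : ℕ} (v : Fin c → PowerSeries F) : ℕ∞ :=
  {p : Fin c × ℕ | PowerSeries.coeff (R := F) p.2 (v p.1) ≠ 0}.encard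

/-- Free distance of the convolutional code generated by `G`. -/
noncomputable def dfree {F : Type*} [Field F] {b c : ℕ}
    (G : Matrix (Fin b) (Fin c) (Polynomial F)) : ℕ∞ :=
  sInf {w : ℕ∞ | ∃ v : Fin c → PowerSeries F,
    (∃ u : Fin b → PowerSeries F, v = encode G u) ∧ v ≠ 0 ∧ w = wH v}

/-- Total Hamming weight of segments `0, …, j-1` of `v`. -/
noncomputable def truncWeight {F : Type*} [Field F] {c : ℕ}
    (v : Fin c → PowerSeries F) (j : ℕ) : ℕ∞ :=
  {p : Fin c × ℕ | p.2 < j ∧ PowerSeries.coeff (R := F) p.2 (v p.1) ≠ 0}.encard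

/-- `i`-th row degree of `G`: the maximum of the natural degrees of the entries of row `i`. -/
def rowDeg {F : Type*} [Field F] {b c : ℕ}
    (G : Matrix (Fin b) (Fin c) (Polynomial F)) (i : Fin b) : ℕ :=
  Finset.univ.sup fun j => (G i j).natDegree

/-- Degree `δ` of `G`: the sum of its row degrees. -/
def degG {F : Type*} [Field F] {b c : ℕ}
    (G : Matrix (Fin b) (Fin c) (Polynomial F)) : ℕ :=
  ∑ i, rowDeg G i

/-- The controller-canonical encoder state `σ_t(u)` of `G` is nonzero: some component
`coeff_{t-s} (u_i)` with `1 ≤ s ≤ ν_i` (and `s ≤ t`, since coefficients with negative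
index are taken to be `0`) is nonzero. -/
def stateNonzero {F : Type*} [Field F] {b c : ℕ}
    (G : Matrix (Fin b) (Fin c) (Polynomial F)) (u : Fin b → PowerSeries F) (t : ℕ) : Prop :=
  ∃ i : Fin b, ∃ s : ℕ, 1 ≤ s ∧ s ≤ rowDeg G i ∧ s ≤ t ∧
    PowerSeries.coeff (R := F) (t - s) (u i) ≠ 0

/-- `G` is a generator matrix: it has rank `b` over the field of rational functions `F(z)`. -/
def IsGenerator {F : Type*} [Field F] {b c : ℕ}
    (G : Matrix (Fin b) (Fin c) (Polynomial F)) : Prop :=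
  (G.map (algebraMap (Polynomial F) (RatFunc F))).rank = b

/-- `G` is basic: it has a polynomial right inverse. -/
def IsBasic {F : Type*} [Field F] {b c : ℕ}
    (G : Matrix (Fin b) (Fin c) (Polynomial F)) : Prop :=
  ∃ H : Matrix (Fin c) (Fin b) (Polynomial F), G * H = 1

/-- The high-order coefficient matrix `[G]_h` of `G`. -/
def highOrder {F : Type*} [Field F] {b c : ℕ}
    (G : Matrix (Fin b) (Fin c) (Polynomial F)) : Matrix (Fin b) (Fin c) F :=
  fun i j => (G i j).coeff (rowDeg G i)

/-- `G` is minimal-basic: basic, and `[G]_h` has full row rank `b` over `F`. -/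
def IsMinimalBasic {F : Type*} [Field F] {b c : ℕ}
    (G : Matrix (Fin b) (Fin c) (Polynomial F)) : Prop :=
  IsBasic G ∧ (highOrder G).rank = b

/-- `(u, j)` determines an element of `S_{dfree}`: `j > 0`, the total Hamming weight of
segments `0, …, j-1` of `u·G` is strictly less than `d_free`, and `σ_t(u) ≠ 0` for all
`1 ≤ t ≤ j`. -/
def SdfreePair {F : Type*} [Field F] {b c : ℕ}
    (G : Matrix (Fin b) (Fin c) (Polynomial F)) (u : Fin b → PowerSeries F) (j : ℕ) : Prop :=
  0 < j ∧ truncWeight (encode G u) j < dfree G ∧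
    ∀ t : ℕ, 1 ≤ t → t ≤ j → stateNonzero G u t

/-- `T_{dfree}(C)`: one plus the supremum of all `j` such that some `u` makes `(u, j)`
determine an element of `S_{dfree}`. -/
noncomputable def Tdfree {F : Type*} [Field F] {b c : ℕ}
    (G : Matrix (Fin b) (Fin c) (Polynomial F)) : ℕ∞ :=
  1 + sSup {x : ℕ∞ | ∃ j : ℕ, x = (j : ℕ∞) ∧ ∃ u : Fin b → PowerSeries F, SdfreePair G u j}

lemma encode_rightInv {F : Type*} [Field F] {b c : ℕ}
    (G : Matrix (Fin b) (Fin c) (Polynomial F)) (H : Matrix (Fin c) (Fin b) (Polynomial F))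
    (hGH : G * H = 1) (w : Fin b → PowerSeries F) (k : Fin b) :
    ∑ j, encode G w j * (H j k : PowerSeries F) = w k := by
  simp only [encode, Finset.sum_mul]
  rw [Finset.sum_comm]
  have key : ∀ i : Fin b, ∑ j, w i * ↑(G i j) * ↑(H j k)
      = w i * ((∑ j, G i j * H j k : Polynomial F) : PowerSeries F) := by
    intro i
    have hcast : ((∑ j, G i j * H j k : Polynomial F) : PowerSeries F)
        = ∑ j, ((G i j * H j k : Polynomial F) : PowerSeries F) := by
      exact_mod_cast map_sum (Polynomial.coeToPowerSeries.ringHom (R := F))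
        (fun j => G i j * H j k) Finset.univ
    rw [hcast, Finset.mul_sum]
    simp [Polynomial.coe_mul, mul_assoc]
  simp only [key]
  have h2 : ∀ i : Fin b, (∑ j, G i j * H j k) = (1 : Matrix (Fin b) (Fin b) (Polynomial F)) i k := by
    intro i; rw [← hGH]; rfl
  simp only [h2, Matrix.one_apply]
  rw [Finset.sum_eq_single k] <;> simp +contextual [Ne, eq_comm]

/-- for a minimal-basic generator matrix of degree `δ ≥ 1`, with
`T = T_{dfree}(C)`, every codeword whose `0`-th input segment is nonzero accumulates at
least the free distance of Hamming weight within its first `T` segments. -/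
theorem weight_ge_dfree_within_Tdfree
    {F : Type*} [Field F] [Fintype F] {b c : ℕ} (hb : 1 ≤ b) (hbc : b < c)
    (G : Matrix (Fin b) (Fin c) (Polynomial F))
    (hGen : IsGenerator G) (hMB : IsMinimalBasic G) (hδ : 1 ≤ degG G)
    (T : ℕ) (hT : (T : ℕ∞) = Tdfree G) :
    ∀ u : Fin b → PowerSeries F, (∃ i : Fin b, PowerSeries.coeff (R := F) 0 (u i) ≠ 0) →
      dfree G ≤ truncWeight (encode G u) T := by
  intro u hu0
  by_contra hnle
  have hlt : truncWeight (encode G u) T < dfree G := lt_of_not_ge hnle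
  obtain ⟨H, hGH⟩ := hMB.1
  have hT1 : 1 ≤ T := by
    have h1 : (1 : ℕ∞) ≤ (T : ℕ∞) := by
      rw [hT, Tdfree]; exact le_self_add
    exact_mod_cast h1
  by_cases hstate : ∀ t : ℕ, 1 ≤ t → t ≤ T → stateNonzero G u t
  · have hmem : (T : ℕ∞) ∈ {x : ℕ∞ | ∃ j : ℕ, x = (j : ℕ∞) ∧
        ∃ u : Fin b → PowerSeries F, SdfreePair G u j} :=
      ⟨T, rfl, u, hT1, hlt, hstate⟩
    have hle : (T : ℕ∞) + 1 ≤ (T : ℕ∞) := by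
      calc (T : ℕ∞) + 1 ≤ sSup {x : ℕ∞ | ∃ j : ℕ, x = (j : ℕ∞) ∧
            ∃ u : Fin b → PowerSeries F, SdfreePair G u j} + 1 :=
          add_le_add_left (le_sSup hmem) 1
        _ = Tdfree G := by rw [Tdfree, add_comm]
        _ = (T : ℕ∞) := hT.symm
    have : ((T + 1 : ℕ) : ℕ∞) ≤ ((T : ℕ) : ℕ∞) := by push_cast; exact hle
    have : T + 1 ≤ T := by exact_mod_cast this
    omega
  · push_neg at hstate
    obtain ⟨t0, ht01, ht0T, hns⟩ := hstate
    rw [stateNonzero] at hns; push_neg at hns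
    set ut : Fin b → PowerSeries F :=
      fun i => PowerSeries.mk (fun n => if n < t0 then PowerSeries.coeff (R := F) n (u i) else 0)
      with hut
    have hagree : ∀ (j : Fin c) (n : ℕ), n < t0 →
        PowerSeries.coeff (R := F) n (encode G ut j) = PowerSeries.coeff (R := F) n (encode G u j) := by
      intro j n hn
      simp only [encode, map_sum, PowerSeries.coeff_mul]
      refine Finset.sum_congr rfl fun i _ => Finset.sum_congr rfl fun p hp => ?_
      rw [Finset.HasAntidiagonal.mem_antidiagonal] at hp
      have hp1 : p.1 < t0 := lt_of_le_of_lt (by omega : p.1 ≤ n) hn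
      simp [hut, PowerSeries.coeff_mk, hp1]
    have hzero : ∀ (j : Fin c) (n : ℕ), t0 ≤ n →
        PowerSeries.coeff (R := F) n (encode G ut j) = 0 := by
      intro j n hn
      simp only [encode, map_sum, PowerSeries.coeff_mul]
      refine Finset.sum_eq_zero fun i _ => Finset.sum_eq_zero fun p hp => ?_
      rw [Finset.HasAntidiagonal.mem_antidiagonal] at hp
      by_cases hp1 : p.1 < t0
      · by_cases hp2 : p.2 ≤ rowDeg G i
        · have hu0' := hns i (t0 - p.1) (by omega) (by omega) (by omega)
          rw [Nat.sub_sub_self hp1.le] at hu0'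
          simp [hut, PowerSeries.coeff_mk, hp1, hu0']
        · have hdeg : (G i j).natDegree < p.2 := by
            have hle : (G i j).natDegree ≤ rowDeg G i :=
              Finset.le_sup (f := fun j => (G i j).natDegree) (Finset.mem_univ j)
            omega
          simp [Polynomial.coeff_coe, Polynomial.coeff_eq_zero_of_natDegree_lt hdeg]
      · simp [hut, PowerSeries.coeff_mk, hp1]
    have hne : encode G ut ≠ 0 := by
      intro h0
      obtain ⟨i, hi⟩ := hu0
      have hrec := encode_rightInv G H hGH ut i
      rw [h0] at hrec
      simp only [Pi.zero_apply, zero_mul, Finset.sum_const_zero] at hrec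
      have hc0 : PowerSeries.coeff (R := F) 0 (ut i) = PowerSeries.coeff (R := F) 0 (u i) := by
        simp only [hut, PowerSeries.coeff_mk]
        rw [if_pos (by omega)]
      rw [← hrec, map_zero] at hc0
      exact hi hc0.symm
    have hdle : dfree G ≤ wH (encode G ut) :=
      sInf_le ⟨encode G ut, ⟨ut, rfl⟩, hne, rfl⟩
    have hwle : wH (encode G ut) ≤ truncWeight (encode G u) T := by
      rw [wH, truncWeight]
      apply Set.encard_mono
      intro p hp
      have hplt : p.2 < t0 := by
        by_contra h
        exact hp (hzero p.1 p.2 (le_of_not_gt h))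
      exact ⟨lt_of_lt_of_le hplt ht0T, by rw [← hagree p.1 p.2 hplt]; exact hp⟩
    exact absurd (lt_of_le_of_lt (hdle.trans hwle) hlt) (lt_irrefl _)
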